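/- Let C be an abelian category. Given short exact sequences 0 → A₁ →e₁ E →p₂ B₂ → 0, 0 → A₁ →f₁ B₁ →g₁ X → 0, and 0 → A₂ →e₂ E →p₁ B₁ → 0 such that f₁ = p₁ ∘ e₁, there exist morphisms f₂ : A₂ → B₂ and g₂ : B₂ → X such that 0 → A₂ →f₂ B₂ →g₂ X → 0 is a short exact sequence, f₂ = p₂ ∘ e₂, and g₂ ∘ p₂ = g₁ ∘ p₁. -/

import Mathlib

open CategoryTheory CategoryTheory.Limits

/-- Given short exact sequences `0 → A₁ → E → B₂ → 0`, `0 → A₁ → B₁ → X → 0` and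
`0 → A₂ → E → B₁ → 0` with `f₁ = p₁ ∘ e₁`, there is a short exact sequence
`0 → A₂ → B₂ → X → 0` with `f₂ = p₂ ∘ e₂` and `g₂ ∘ p₂ = g₁ ∘ p₁`. -/
theorem stmt9 {C : Type*} [Category C] [Abelian C]
    {A₁ A₂ B₁ B₂ E X : C}
    (e₁ : A₁ ⟶ E) (p₂ : E ⟶ B₂) (f₁ : A₁ ⟶ B₁) (g₁ : B₁ ⟶ X)
    (e₂ : A₂ ⟶ E) (p₁ : E ⟶ B₁)
    (w1 : e₁ ≫ p₂ = 0) (h1 : (ShortComplex.mk e₁ p₂ w1).ShortExact)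
    (w2 : f₁ ≫ g₁ = 0) (h2 : (ShortComplex.mk f₁ g₁ w2).ShortExact)
    (w3 : e₂ ≫ p₁ = 0) (h3 : (ShortComplex.mk e₂ p₁ w3).ShortExact)
    (hf : f₁ = e₁ ≫ p₁) :
    ∃ (f₂ : A₂ ⟶ B₂) (g₂ : B₂ ⟶ X) (w : f₂ ≫ g₂ = 0),
      (ShortComplex.mk f₂ g₂ w).ShortExact ∧
      f₂ = e₂ ≫ p₂ ∧ p₂ ≫ g₂ = p₁ ≫ g₁ := by
  open CategoryTheory.Abelian.Pseudoelement in
  open scoped Pseudoelement in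
  have mono_e₂ : Mono e₂ := h3.mono_f
  have mono_f₁ : Mono f₁ := h2.mono_f
  have epi_p₂ : Epi p₂ := h1.epi_g
  have epi_p₁ : Epi p₁ := h3.epi_g
  have epi_g₁ : Epi g₁ := h2.epi_g
  have hz : e₁ ≫ (p₁ ≫ g₁) = 0 := by rw [← Category.assoc, ← hf, w2]
  obtain ⟨g₂, hg₂⟩ := CokernelCofork.IsColimit.desc' h1.gIsCokernel (p₁ ≫ g₁) hz
  dsimp at hg₂
  refine ⟨e₂ ≫ p₂, g₂, ?_, ?_, rfl, hg₂⟩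
  · rw [Category.assoc, hg₂, ← Category.assoc, w3, zero_comp]
  · have exact1 := pseudo_exact_of_exact (S := ShortComplex.mk e₁ p₂ w1) h1.exact
    have exact2 := pseudo_exact_of_exact (S := ShortComplex.mk f₁ g₁ w2) h2.exact
    have exact3 := pseudo_exact_of_exact (S := ShortComplex.mk e₂ p₁ w3) h3.exact
    have mono : Mono (e₂ ≫ p₂) := by
      apply mono_of_zero_of_map_zero
      intro a ha
      rw [Abelian.Pseudoelement.comp_apply] at ha
      obtain ⟨a₁, ha₁⟩ := exact1 _ ha
      have hfa : f₁ a₁ = 0 := by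
        rw [hf, Abelian.Pseudoelement.comp_apply, ha₁, ← Abelian.Pseudoelement.comp_apply, w3, Abelian.Pseudoelement.zero_apply]
      have : a₁ = 0 := zero_of_map_zero _ (pseudo_injective_of_mono f₁) _ hfa
      rw [this, apply_zero] at ha₁
      exact zero_of_map_zero _ (pseudo_injective_of_mono e₂) _ ha₁.symm
    have epi : Epi g₂ := by
      have : Epi (p₂ ≫ g₂) := by rw [hg₂]; exact epi_comp p₁ g₁
      exact epi_of_epi p₂ g₂
    refine ShortComplex.ShortExact.mk' ?_ mono epi
    apply exact_of_pseudo_exact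
    intro b hb
    obtain ⟨e, he⟩ := pseudo_surjective_of_epi p₂ b
    have hge : g₁ (p₁ e) = 0 := by
      rw [← Abelian.Pseudoelement.comp_apply, ← hg₂, Abelian.Pseudoelement.comp_apply, he, hb]
    obtain ⟨a₁, ha₁⟩ := exact2 _ hge
    have heq : p₁ e = p₁ (e₁ a₁) := by
      rw [← Abelian.Pseudoelement.comp_apply, ← hf, ha₁]
    obtain ⟨z, hz0, hzf⟩ := sub_of_eq_image p₁ e (e₁ a₁) heq
    obtain ⟨a₂, ha₂⟩ := exact3 z hz0
    refine ⟨a₂, ?_⟩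
    have hp2 : p₂ (e₁ a₁) = 0 := by rw [← Abelian.Pseudoelement.comp_apply, w1, Abelian.Pseudoelement.zero_apply]
    rw [Abelian.Pseudoelement.comp_apply, ha₂, hzf B₂ p₂ hp2, he]
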